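/- Let g : (0,∞) → ℝ be non-increasing, non-negative, and differentiable, and let p > 0 be an external market price. Consider the arbitrageur's profit function Φ(p₁) = p·(g(p₀) - g(p₁)) + ∫_{p₀}^{p₁} s g'(s) ds for a fixed current price p₀ > 0. Then Φ is maximized at p₁ = p (price discovery). -/

import Mathlib

open MeasureTheory Set intervalIntegral

/-- The derivative of an antitone function on `Ioi 0` is nonpositive. -/
lemma deriv_nonpos_of_antitoneOn (g g' : ℝ → ℝ)
    (hderiv : ∀ s ∈ Ioi (0:ℝ), HasDerivAt g (g' s) s)
    (hanti : AntitoneOn g (Ioi 0)) : ∀ s ∈ Ioi (0:ℝ), g' s ≤ 0 := by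
  intro s hs
  have hd := ((hderiv s hs).hasDerivWithinAt (s := Ioi s))
  rw [hasDerivWithinAt_iff_tendsto_slope, Set.diff_singleton_eq_self (notMem_Ioi.2 le_rfl)] at hd
  haveI : (nhdsWithin s (Ioi s)).NeBot := nhdsGT_neBot s
  refine le_of_tendsto hd ?_
  filter_upwards [self_mem_nhdsWithin] with y hy
  have hys : s < y := hy
  have hy0 : y ∈ Ioi (0:ℝ) := lt_trans hs hys
  have hle : g y ≤ g s := hanti hs hy0 hys.le
  rw [slope_def_field]
  have : (g y - g s) / (y - s) ≤ 0 :=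
    div_nonpos_of_nonpos_of_nonneg (by linarith) (by linarith)
  simpa [div_eq_inv_mul] using this

/-- **price discovery.** For a differentiable, non-increasing, non-negative
demand curve `g` with derivative `g'`, a fixed current price `p₀ > 0` and an external
market price `p > 0`, the arbitrageur's profit
`Φ(p₁) = p·(g(p₀) - g(p₁)) + ∫_{p₀}^{p₁} s g'(s) ds` is maximized at `p₁ = p`. -/
theorem stmt3 (g g' : ℝ → ℝ)
    (hderiv : ∀ s ∈ Ioi (0:ℝ), HasDerivAt g (g' s) s)
    (hanti : AntitoneOn g (Ioi 0))
    (hnonneg : ∀ s ∈ Ioi (0:ℝ), 0 ≤ g s)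
    (hint : ∀ a b : ℝ, 0 < a → 0 < b → IntervalIntegrable (fun s => s * g' s) volume a b)
    (p₀ p : ℝ) (hp₀ : 0 < p₀) (hp : 0 < p) :
    ∀ p₁ : ℝ, 0 < p₁ →
      p * (g p₀ - g p₁) + (∫ s in p₀..p₁, s * g' s)
        ≤ p * (g p₀ - g p) + ∫ s in p₀..p, s * g' s := by
  intro p₁ hp₁
  have hg'le := deriv_nonpos_of_antitoneOn g g' hderiv hanti
  -- interval integrability of g' on positive intervals
  have hintg' : ∀ a b : ℝ, 0 < a → 0 < b → IntervalIntegrable g' volume a b := by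
    intro a b ha hb
    have hsub : uIcc a b ⊆ Ioi (0:ℝ) := by
      intro x hx
      have := hx.1
      have hmin : (0:ℝ) < min a b := lt_min ha hb
      exact lt_of_lt_of_le hmin this
    have hcont : ContinuousOn (fun s : ℝ => s⁻¹) (uIcc a b) :=
      ContinuousOn.inv₀ continuousOn_id (fun x hx => ne_of_gt (hsub hx))
    have h1 : IntervalIntegrable (fun x => x⁻¹ * (x * g' x)) volume a b :=
      (hint a b ha hb).continuousOn_mul hcont
    refine h1.congr_ae ?_
    refine (ae_restrict_iff' measurableSet_uIoc).2 (ae_of_all _ fun x hx => ?_)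
    have hx0 : (0:ℝ) < x := by
      have := hx.1
      have hmin : (0:ℝ) < min a b := lt_min ha hb
      exact lt_of_lt_of_le hmin this.le
    field_simp
  -- FTC for g' on positive intervals
  have hftc : ∀ a b : ℝ, 0 < a → 0 < b → (∫ s in a..b, g' s) = g b - g a := by
    intro a b ha hb
    refine integral_eq_sub_of_hasDerivAt (fun x hx => hderiv x ?_) (hintg' a b ha hb)
    have hmin : (0:ℝ) < min a b := lt_min ha hb
    exact lt_of_lt_of_le hmin hx.1
  -- the key nonnegative quantity
  have hkey : 0 ≤ ∫ s in p₁..p, (s - p) * g' s := by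
    rcases le_total p₁ p with h | h
    · -- on [p₁, p], s - p ≤ 0 and g' s ≤ 0
      refine _root_.intervalIntegral.integral_nonneg h fun x hx => ?_
      have hx0 : (0:ℝ) < x := lt_of_lt_of_le hp₁ hx.1
      nlinarith [hg'le x hx0, hx.2]
    · -- p ≤ p₁ : flip orientation, integrand ≤ 0 on [p, p₁]
      rw [_root_.intervalIntegral.integral_symm p p₁]
      have h2 : 0 ≤ ∫ s in p..p₁, (p - s) * g' s := by
        refine _root_.intervalIntegral.integral_nonneg h fun x hx => ?_
        have hx0 : (0:ℝ) < x := lt_of_lt_of_le hp hx.1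
        nlinarith [hg'le x hx0, hx.1]
      have h3 : (∫ s in p..p₁, (s - p) * g' s) = -∫ s in p..p₁, (p - s) * g' s := by
        rw [← _root_.intervalIntegral.integral_neg]
        congr 1
        ext s
        ring
      rw [h3]
      linarith
  -- expand the key integral
  have hsplit : (∫ s in p₁..p, (s - p) * g' s)
      = (∫ s in p₁..p, s * g' s) - p * (g p - g p₁) := by
    have h1 : (∫ s in p₁..p, (s - p) * g' s)
        = (∫ s in p₁..p, s * g' s) - ∫ s in p₁..p, p * g' s := by
      rw [← _root_.intervalIntegral.integral_sub (hint p₁ p hp₁ hp)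
        ((hintg' p₁ p hp₁ hp).const_mul p)]
      congr 1
      ext s
      ring
    rw [h1, _root_.intervalIntegral.integral_const_mul, hftc p₁ p hp₁ hp]
  -- combine integrals from p₀
  have hadd : (∫ s in p₀..p₁, s * g' s) + (∫ s in p₁..p, s * g' s)
      = ∫ s in p₀..p, s * g' s :=
    _root_.intervalIntegral.integral_add_adjacent_intervals (hint p₀ p₁ hp₀ hp₁)
      (hint p₁ p hp₁ hp)
  rw [hsplit] at hkey
  linarith
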